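/- Let P, R be probability distributions on a finite set X with P full support and R absolutely continuous w.r.t. P, with true weights w*(x) = R(x)/P(x). Let Q = w·P with w positive, and let C ⊆ X with R(C), Q(C), P(C) > 0. If |Q(C) − R(C)| ≤ α (multiaccuracy) and KL(R|_C ‖ Q|_C) is finite, then E_{R|_C}[log w(x)] ≤ E_{R|_C}[log w*(x)] + α/R(C). -/

import Mathlib

open Finset

noncomputable def kl {X : Type*} [Fintype X] (μ ν : X → ℝ) : ℝ :=
  ∑ x, μ x * Real.log (μ x / ν x)

noncomputable def condOn {X : Type*} [Fintype X] (μ : X → ℝ) (C : Finset X) : X → ℝ :=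
  fun x => @ite ℝ (x ∈ C) (Classical.propDecidable _) (μ x / (∑ y ∈ C, μ y)) 0

noncomputable def bkl (p q : ℝ) : ℝ :=
  p * Real.log (p / q) + (1 - p) * Real.log ((1 - p) / (1 - q))

theorem sandwich_upper {X : Type*} [Fintype X]
    (P R w : X → ℝ) (hP : ∀ x, 0 < P x) (hR : ∀ x, 0 ≤ R x) (hw : ∀ x, 0 < w x)
    (hPsum : ∑ x, P x = 1) (hRsum : ∑ x, R x = 1)
    (Q : X → ℝ) (hQdef : ∀ x, Q x = w x * P x) (hQsum : ∑ x, Q x = 1)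
    (C : Finset X)
    (hRC : 0 < ∑ x ∈ C, R x) (hQC : 0 < ∑ x ∈ C, Q x) (hPC : 0 < ∑ x ∈ C, P x)
    (α : ℝ) (hα : 0 ≤ α)
    (hma : |(∑ x ∈ C, Q x) - (∑ x ∈ C, R x)| ≤ α) :
    (∑ x ∈ C, (R x / (∑ y ∈ C, R y)) * Real.log (w x))
      ≤ (∑ x ∈ C, (R x / (∑ y ∈ C, R y)) * Real.log (R x / P x))
        + α / (∑ x ∈ C, R x) := by
  have hQpos : ∀ x, 0 < Q x := fun x => by rw [hQdef]; exact mul_pos (hw x) (hP x)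
  -- Gibbs per-term bound
  have gibbs : ∀ x ∈ C, R x * Real.log (Q x / R x) ≤ Q x - R x := by
    intro x _
    rcases eq_or_lt_of_le (hR x) with h | h
    · simp [← h, le_of_lt (hQpos x)]
    · have hlog : Real.log (Q x / R x) ≤ Q x / R x - 1 :=
        Real.log_le_sub_one_of_pos (div_pos (hQpos x) h)
      have := mul_le_mul_of_nonneg_left hlog (le_of_lt h)
      calc R x * Real.log (Q x / R x) ≤ R x * (Q x / R x - 1) := this
        _ = Q x - R x := by field_simp
  have gibbs_sum : ∑ x ∈ C, R x * Real.log (Q x / R x) ≤ α := by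
    calc ∑ x ∈ C, R x * Real.log (Q x / R x)
        ≤ ∑ x ∈ C, (Q x - R x) := Finset.sum_le_sum gibbs
      _ = (∑ x ∈ C, Q x) - (∑ x ∈ C, R x) := Finset.sum_sub_distrib Q R
      _ ≤ |(∑ x ∈ C, Q x) - (∑ x ∈ C, R x)| := le_abs_self _
      _ ≤ α := hma
  have key : ∀ x ∈ C, R x * Real.log (w x)
      = R x * Real.log (Q x / R x) + R x * Real.log (R x / P x) := by
    intro x _
    rcases eq_or_lt_of_le (hR x) with h | h
    · simp [← h]
    · have hPx := hP x
      have hwx := hw x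
      have : Real.log (w x) = Real.log (Q x / R x) + Real.log (R x / P x) := by
        rw [← Real.log_mul (div_pos (hQpos x) h).ne' (div_pos h hPx).ne']
        congr 1
        rw [hQdef]
        field_simp
      rw [this]; ring
  have main : ∑ x ∈ C, R x * Real.log (w x)
      ≤ (∑ x ∈ C, R x * Real.log (R x / P x)) + α := by
    calc ∑ x ∈ C, R x * Real.log (w x)
        = ∑ x ∈ C, (R x * Real.log (Q x / R x) + R x * Real.log (R x / P x)) :=
          Finset.sum_congr rfl key
      _ = (∑ x ∈ C, R x * Real.log (Q x / R x)) + ∑ x ∈ C, R x * Real.log (R x / P x) :=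
          Finset.sum_add_distrib
      _ ≤ (∑ x ∈ C, R x * Real.log (R x / P x)) + α := by linarith [gibbs_sum]
  have h1 : ∀ (f : X → ℝ), ∑ x ∈ C, (R x / (∑ y ∈ C, R y)) * f x
      = (∑ x ∈ C, R x * f x) / (∑ y ∈ C, R y) := by
    intro f
    rw [Finset.sum_div]
    exact Finset.sum_congr rfl fun x _ => by ring
  rw [h1, h1, ← add_div, div_le_div_iff_of_pos_right hRC]
  exact main
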